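/- arXiv:2603.25447 — 2 statements merged into one kernel-verified Lean document; each statement's English description precedes it below -/
import Mathlib

section
/- Let u > 0. Then (4/√π) · ∫₀^u (s² − (3s³)/(2u) + s⁵/(2u³)) · e^{−s²} ds = (2/√π)·∫₀^u e^{−s²} ds − (1/√π)·[ (3/u − 2/u³) − e^{−u²}·(1/u − 2/u³) ]. -/
/-- Closed form of the Gaussian integral arising in the free-diffusion
full-FRAP curve. -/
theorem free_diffusion_gaussian_integral (u : ℝ) (hu : 0 < u) :
    (4 / Real.sqrt Real.pi) *
        ∫ s in (0:ℝ)..u,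
          (s ^ 2 - 3 * s ^ 3 / (2 * u) + s ^ 5 / (2 * u ^ 3)) * Real.exp (-s ^ 2)
      = (2 / Real.sqrt Real.pi) * (∫ s in (0:ℝ)..u, Real.exp (-s ^ 2))
        - (1 / Real.sqrt Real.pi) *
            ((3 / u - 2 / u ^ 3) - Real.exp (-u ^ 2) * (1 / u - 2 / u ^ 3)) := by
  have hu0 : u ≠ 0 := ne_of_gt hu
  have hsp : Real.sqrt Real.pi ≠ 0 := by positivity
  set F : ℝ → ℝ := fun s =>
    (1/2) * (∫ t in (0:ℝ)..s, Real.exp (-t^2))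
      - s/2 * Real.exp (-s^2)
      + 3/(4*u) * ((s^2+1) * Real.exp (-s^2))
      - 1/(4*u^3) * ((s^4+2*s^2+2) * Real.exp (-s^2)) with hFdef
  have hcont : Continuous fun t : ℝ => Real.exp (-t^2) := by continuity
  have hderiv : ∀ x ∈ Set.uIcc (0:ℝ) u, HasDerivAt F
      ((x ^ 2 - 3 * x ^ 3 / (2 * u) + x ^ 5 / (2 * u ^ 3)) * Real.exp (-x ^ 2)) x := by
    intro x _
    have hI : HasDerivAt (fun s => ∫ t in (0:ℝ)..s, Real.exp (-t^2)) (Real.exp (-x^2)) x :=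
      intervalIntegral.integral_hasDerivAt_right (hcont.intervalIntegrable _ _)
        (hcont.stronglyMeasurableAtFilter _ _) hcont.continuousAt
    have hE : HasDerivAt (fun s : ℝ => Real.exp (-s^2)) (-(2*x) * Real.exp (-x^2)) x := by
      have h := ((hasDerivAt_pow 2 x).neg).exp
      refine h.congr_deriv ?_
      simp only [Pi.neg_apply]; norm_num; ring
    have hp1 : HasDerivAt (fun s : ℝ => s/2) (1/2) x := by
      simpa using (hasDerivAt_id x).div_const 2
    have hp2 : HasDerivAt (fun s : ℝ => s^2+1) (2*x) x := by
      have h := (hasDerivAt_pow 2 x).add_const 1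
      refine h.congr_deriv ?_
      norm_num
    have hp3 : HasDerivAt (fun s : ℝ => s^4+2*s^2+2) (4*x^3+4*x) x := by
      have h := (((hasDerivAt_pow 4 x).add ((hasDerivAt_pow 2 x).const_mul 2)).add_const 2)
      refine h.congr_deriv ?_
      push_cast
      ring
    have hF' := (((hI.const_mul (1/2)).sub (hp1.mul hE)).add
        ((hp2.mul hE).const_mul (3/(4*u)))).sub ((hp3.mul hE).const_mul (1/(4*u^3)))
    refine hF'.congr_deriv ?_
    field_simp
    ring
  have hint : IntervalIntegrable
      (fun s => (s ^ 2 - 3 * s ^ 3 / (2 * u) + s ^ 5 / (2 * u ^ 3)) * Real.exp (-s ^ 2))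
      MeasureTheory.volume 0 u := by
    apply Continuous.intervalIntegrable
    fun_prop
  have key := intervalIntegral.integral_eq_sub_of_hasDerivAt hderiv hint
  rw [key]
  simp only [hFdef]
  simp only [intervalIntegral.integral_same]
  norm_num
  field_simp
  ring
end

section
/- Let R > 0, D > 0, t > 0, set u = R/√(D·t) and V = 4πR³/3. Then (1/V) · ∫_{B(0,R)} ∫_{B(0,R)} (4πDt)^{−3/2} · exp(−‖x − x'‖²/(4Dt)) dx' dx = erf(u) − (1/√π)·[ (3/u − 2/u³) − e^{−u²}·(1/u − 2/u³) ], where B(0,R) is the ball of radius R in EuclideanSpace ℝ (Fin 3) and erf(u) = (2/√π)∫₀^u e^{−s²} ds. -/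
set_option maxHeartbeats 1000000

open MeasureTheory Metric Real intervalIntegral


lemma gaussDeriv (s : ℝ) : HasDerivAt (fun x : ℝ => Real.exp (-x^2)) (-2*s*Real.exp (-s^2)) s := by
  have h : HasDerivAt (fun x : ℝ => -x^2) (-(2*s)) s := by
    simpa using (hasDerivAt_pow 2 s).fun_neg
  have := (Real.hasDerivAt_exp (-s^2)).comp s h
  exact this.congr_deriv (by ring)

lemma mom2 (u : ℝ) : ∫ s in (0:ℝ)..u, s^2 * Real.exp (-s^2)
    = (∫ s in (0:ℝ)..u, Real.exp (-s^2))/2 - u * Real.exp (-u^2)/2 := by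
  have h : ∀ s ∈ Set.uIcc (0:ℝ) u, HasDerivAt (fun x : ℝ => -(x * Real.exp (-x^2))/2)
      (s^2 * Real.exp (-s^2) - Real.exp (-s^2)/2) s := by
    intro s _
    have h2 : HasDerivAt (fun x : ℝ => x * Real.exp (-x^2))
        (1 * Real.exp (-s^2) + s * (-2*s*Real.exp (-s^2))) s :=
      (hasDerivAt_id s).mul (gaussDeriv s)
    exact (h2.neg.div_const 2).congr_deriv (by ring)
  have hInt : IntervalIntegrable (fun s : ℝ => s^2 * Real.exp (-s^2) - Real.exp (-s^2)/2)
      volume 0 u := by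
    apply Continuous.intervalIntegrable; continuity
  have key := intervalIntegral.integral_eq_sub_of_hasDerivAt h hInt
  have hsub : ∫ s in (0:ℝ)..u, (s^2 * Real.exp (-s^2) - Real.exp (-s^2)/2)
      = (∫ s in (0:ℝ)..u, s^2 * Real.exp (-s^2)) - ∫ s in (0:ℝ)..u, Real.exp (-s^2)/2 := by
    apply intervalIntegral.integral_sub <;> (apply Continuous.intervalIntegrable; continuity)
  have hdiv : ∫ s in (0:ℝ)..u, Real.exp (-s^2)/2 = (∫ s in (0:ℝ)..u, Real.exp (-s^2))/2 :=
    intervalIntegral.integral_div 2 (fun s => Real.exp (-s^2))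
  rw [hsub, hdiv] at key
  have : (∫ s in (0:ℝ)..u, s^2 * Real.exp (-s^2)) - (∫ s in (0:ℝ)..u, Real.exp (-s^2))/2
      = -(u * Real.exp (-u^2))/2 - -(0 * Real.exp (-(0:ℝ)^2))/2 := key
  linarith [this]

lemma mom3 (u : ℝ) : ∫ s in (0:ℝ)..u, s^3 * Real.exp (-s^2)
    = 1/2 - (1+u^2) * Real.exp (-u^2)/2 := by
  have h : ∀ s ∈ Set.uIcc (0:ℝ) u, HasDerivAt (fun x : ℝ => -(1+x^2) * Real.exp (-x^2)/2)
      (s^3 * Real.exp (-s^2)) s := by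
    intro s _
    have h2 : HasDerivAt (fun x : ℝ => -(1+x^2) * Real.exp (-x^2))
        ((-(2*s)) * Real.exp (-s^2) + (-(1+s^2)) * (-2*s*Real.exp (-s^2))) s := by
      have hp : HasDerivAt (fun x : ℝ => -(1+x^2)) (-(2*s)) s := by
        simpa using ((hasDerivAt_pow 2 s).const_add 1).fun_neg
      exact hp.mul (gaussDeriv s)
    exact (h2.div_const 2).congr_deriv (by ring)
  have key := intervalIntegral.integral_eq_sub_of_hasDerivAt h
    (by apply Continuous.intervalIntegrable; continuity)
  rw [key]; simp; ring

lemma mom5 (u : ℝ) : ∫ s in (0:ℝ)..u, s^5 * Real.exp (-s^2)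
    = 1 - (1+u^2+u^4/2) * Real.exp (-u^2) := by
  have h : ∀ s ∈ Set.uIcc (0:ℝ) u, HasDerivAt (fun x : ℝ => -(1+x^2+x^4/2) * Real.exp (-x^2))
      (s^5 * Real.exp (-s^2)) s := by
    intro s _
    have hp : HasDerivAt (fun x : ℝ => -(1+x^2+x^4/2)) (-(2*s + 4*s^3/2)) s := by
      have := (((hasDerivAt_pow 2 s).const_add 1).add ((hasDerivAt_pow 4 s).div_const 2)).neg
      exact this.congr_deriv (by ring_nf)
    have h2 := hp.mul (gaussDeriv s)
    exact h2.congr_deriv (by ring)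
  have key := intervalIntegral.integral_eq_sub_of_hasDerivAt h
    (by apply Continuous.intervalIntegrable; continuity)
  rw [key]; simp; ring

lemma disk_vol (c : ℝ) :
    volume {w : Fin 2 → ℝ | w 0^2 + w 1^2 < c} = ENNReal.ofReal (π * c) := by
  rcases le_or_gt c 0 with hc | hc
  · have he : {w : Fin 2 → ℝ | w 0^2 + w 1^2 < c} = ∅ := by
      ext w
      simp only [Set.mem_setOf_eq, Set.mem_empty_iff_false, iff_false, not_lt]
      nlinarith [sq_nonneg (w 0), sq_nonneg (w 1)]
    rw [he]
    simp [ENNReal.ofReal_eq_zero.mpr (mul_nonpos_of_nonneg_of_nonpos Real.pi_pos.le hc)]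
  · have hpre : ((MeasurableEquiv.toLp 2 (Fin 2 → ℝ)).symm) ⁻¹' {w : Fin 2 → ℝ | w 0^2 + w 1^2 < c}
        = ball (0 : EuclideanSpace ℝ (Fin 2)) (Real.sqrt c) := by
      ext x
      simp only [Set.mem_preimage, mem_ball, Set.mem_setOf_eq, dist_zero_right,
        EuclideanSpace.norm_eq]
      rw [Fin.sum_univ_two]
      have hx : ((MeasurableEquiv.toLp 2 (Fin 2 → ℝ)).symm) x = (x : Fin 2 → ℝ) := rfl
      rw [hx]
      rw [Real.sqrt_lt' (Real.sqrt_pos.mpr hc), Real.sq_sqrt hc.le]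
      simp [Real.norm_eq_abs, sq_abs]
    have hmp := (EuclideanSpace.volume_preserving_symm_measurableEquiv_toLp (Fin 2)).measure_preimage
      (s := {w : Fin 2 → ℝ | w 0^2 + w 1^2 < c}) ?_
    · rw [← hmp, hpre, EuclideanSpace.volume_ball]
      rw [Fintype.card_fin]
      have h2 : ((2:ℕ):ℝ)/2 + 1 = 2 := by norm_num
      rw [h2, Real.Gamma_two]
      rw [← ENNReal.ofReal_pow (Real.sqrt_nonneg c), Real.sq_sqrt hc.le]
      rw [← ENNReal.ofReal_mul hc.le]
      congr 1
      rw [div_one, Real.sq_sqrt Real.pi_pos.le]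
      ring
    · exact (IsOpen.measurableSet (by
        apply isOpen_lt (((continuous_apply (0:Fin 2)).pow 2).add ((continuous_apply (1:Fin 2)).pow 2)) continuous_const)).nullMeasurableSet

lemma oneD_int (R d : ℝ) (hR : 0 < R) (hd : 0 < d) (hd2 : d < 2*R) :
    ∫ x : ℝ, π * max 0 (min (R^2 - x^2) (R^2 - (x - d)^2))
      = π * (16*R^3 - 12*R^2*d + d^3)/12 := by
  set h : ℝ → ℝ := fun x => π * max 0 (min (R^2 - x^2) (R^2 - (x - d)^2)) with hh
  have hcont : Continuous h := by
    apply Continuous.mul continuous_const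
    exact continuous_const.max (Continuous.min
      (continuous_const.sub (continuous_id.pow 2))
      (continuous_const.sub ((continuous_id.sub continuous_const).pow 2)))
  have hvanish : ∀ x ∉ Set.Ioo (d - R) R, h x = 0 := by
    intro x hx
    simp only [Set.mem_Ioo, not_and_or, not_lt] at hx
    have : min (R^2 - x^2) (R^2 - (x - d)^2) ≤ 0 := by
      rcases hx with hx | hx
      · exact le_trans (min_le_right _ _) (by nlinarith)
      · exact le_trans (min_le_left _ _) (by nlinarith)
    rw [hh]; simp only [max_eq_left this, mul_zero]
  have h1 : ∫ x : ℝ, h x = ∫ x in Set.Ioo (d-R) R, h x :=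
    (setIntegral_eq_integral_of_forall_compl_eq_zero hvanish).symm
  have hle1 : d - R ≤ d/2 := by linarith
  have hle2 : d/2 ≤ R := by linarith
  have h2 : ∫ x in Set.Ioo (d-R) R, h x = ∫ x in (d-R)..R, h x := by
    rw [intervalIntegral.integral_of_le (by linarith), ← integral_Ioc_eq_integral_Ioo]
  have h3 : ∫ x in (d-R)..R, h x = (∫ x in (d-R)..(d/2), h x) + ∫ x in (d/2)..R, h x :=
    (intervalIntegral.integral_add_adjacent_intervals
      (hcont.intervalIntegrable _ _) (hcont.intervalIntegrable _ _)).symm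
  have hpiece1 : ∫ x in (d-R)..(d/2), h x = ∫ x in (d-R)..(d/2), π * (R^2 - (x-d)^2) := by
    apply intervalIntegral.integral_congr
    intro x hx
    rw [Set.uIcc_of_le hle1, Set.mem_Icc] at hx
    have hmin : min (R^2 - x^2) (R^2 - (x - d)^2) = R^2 - (x-d)^2 := by
      apply min_eq_right; nlinarith [hx.1, hx.2]
    have hnn : 0 ≤ R^2 - (x-d)^2 := by nlinarith [hx.1, hx.2]
    rw [hh]; simp only [hmin, max_eq_right hnn]
  have hpiece2 : ∫ x in (d/2)..R, h x = ∫ x in (d/2)..R, π * (R^2 - x^2) := by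
    apply intervalIntegral.integral_congr
    intro x hx
    rw [Set.uIcc_of_le hle2, Set.mem_Icc] at hx
    have hmin : min (R^2 - x^2) (R^2 - (x - d)^2) = R^2 - x^2 := by
      apply min_eq_left; nlinarith [hx.1, hx.2]
    have hnn : 0 ≤ R^2 - x^2 := by nlinarith [hx.1, hx.2]
    rw [hh]; simp only [hmin, max_eq_right hnn]
  have hft1 : ∫ x in (d-R)..(d/2), π * (R^2 - (x-d)^2)
      = (π * (R^2*(d/2) - (d/2-d)^3/3)) - (π * (R^2*(d-R) - ((d-R)-d)^3/3)) := by
    have key := intervalIntegral.integral_eq_sub_of_hasDerivAt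
      (f := fun x : ℝ => π * (R^2*x - (x-d)^3/3))
      (f' := fun x : ℝ => π * (R^2 - (x-d)^2)) (a := d-R) (b := d/2) ?_ ?_
    · simpa using key
    · intro x _
      have hda : HasDerivAt (fun x : ℝ => π * (R^2*x - (x-d)^3/3))
          (π * (R^2*1 - (3*(x-d)^2*1)/3)) x := by
        apply HasDerivAt.const_mul
        exact ((hasDerivAt_id x).const_mul (R^2)).sub
          ((((hasDerivAt_id x).sub_const d).pow 3).div_const 3)
      exact hda.congr_deriv (by beta_reduce; ring)
    · exact (continuous_const.mul (continuous_const.sub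
        ((continuous_id.sub continuous_const).pow 2))).intervalIntegrable _ _
  have hft2 : ∫ x in (d/2)..R, π * (R^2 - x^2)
      = (π * (R^2*R - R^3/3)) - (π * (R^2*(d/2) - (d/2)^3/3)) := by
    have key := intervalIntegral.integral_eq_sub_of_hasDerivAt
      (f := fun x : ℝ => π * (R^2*x - x^3/3))
      (f' := fun x : ℝ => π * (R^2 - x^2)) (a := d/2) (b := R) ?_ ?_
    · simpa using key
    · intro x _
      have hda : HasDerivAt (fun x : ℝ => π * (R^2*x - x^3/3))
          (π * (R^2*1 - (3*x^2*1)/3)) x := by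
        apply HasDerivAt.const_mul
        exact ((hasDerivAt_id x).const_mul (R^2)).sub
          (((hasDerivAt_pow 3 x).congr_deriv (by ring)).div_const 3)
      exact hda.congr_deriv (by beta_reduce; ring)
    · exact (continuous_const.mul (continuous_const.sub
        (continuous_id.pow 2))).intervalIntegrable _ _
  rw [h1, h2, h3, hpiece1, hpiece2, hft1, hft2]
  ring

lemma lens_pi (R d : ℝ) (hR : 0 < R) (hd : 0 < d) (hd2 : d < 2*R) :
    volume {y : Fin 3 → ℝ | y 0^2 + (y 1^2 + y 2^2) < R^2
        ∧ (y 0 - d)^2 + (y 1^2 + y 2^2) < R^2}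
      = ENNReal.ofReal (π * (16*R^3 - 12*R^2*d + d^3)/12) := by
  set T : Set (ℝ × (Fin 2 → ℝ)) :=
    {p | p.2 0^2 + p.2 1^2 < min (R^2 - p.1^2) (R^2 - (p.1 - d)^2)} with hT
  have hTmeas : MeasurableSet T := by
    apply IsOpen.measurableSet
    apply isOpen_lt
    · exact (((continuous_apply (0:Fin 2)).comp continuous_snd).pow 2).add
        (((continuous_apply (1:Fin 2)).comp continuous_snd).pow 2)
    · exact Continuous.min
        (continuous_const.sub (continuous_fst.pow 2))
        (continuous_const.sub ((continuous_fst.sub continuous_const).pow 2))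
  have hpre : (MeasurableEquiv.piFinSuccAbove (fun _ : Fin 3 => ℝ) 0) ⁻¹' T
      = {y : Fin 3 → ℝ | y 0^2 + (y 1^2 + y 2^2) < R^2
          ∧ (y 0 - d)^2 + (y 1^2 + y 2^2) < R^2} := by
    ext y
    have e0 : (0:Fin 3).succAbove (0:Fin 2) = 1 := rfl
    have e1 : (0:Fin 3).succAbove (1:Fin 2) = 2 := rfl
    simp only [Set.mem_preimage, hT, Set.mem_setOf_eq, MeasurableEquiv.piFinSuccAbove_apply,
      Fin.insertNthEquiv, Equiv.coe_fn_symm_mk, Fin.removeNth, e0, e1, lt_min_iff]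
    constructor
    · rintro ⟨h1, h2⟩; constructor <;> linarith
    · rintro ⟨h1, h2⟩; constructor <;> linarith
  rw [← hpre]
  rw [(volume_preserving_piFinSuccAbove (fun _ : Fin 3 => ℝ) 0).measure_preimage
    hTmeas.nullMeasurableSet]
  rw [Measure.volume_eq_prod, Measure.prod_apply hTmeas]
  have hslice : ∀ x : ℝ, volume (Prod.mk x ⁻¹' T)
      = ENNReal.ofReal (π * max 0 (min (R^2 - x^2) (R^2 - (x - d)^2))) := by
    intro x
    have : Prod.mk x ⁻¹' T
        = {w : Fin 2 → ℝ | w 0^2 + w 1^2 < min (R^2 - x^2) (R^2 - (x - d)^2)} := rfl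
    rw [this, disk_vol]
    rcases le_or_gt (min (R^2 - x^2) (R^2 - (x - d)^2)) 0 with hm | hm
    · rw [max_eq_left hm]
      simp [ENNReal.ofReal_eq_zero.mpr (mul_nonpos_of_nonneg_of_nonpos Real.pi_pos.le hm)]
    · rw [max_eq_right hm.le]
  simp_rw [hslice]
  have hcont : Continuous (fun x : ℝ => π * max 0 (min (R^2 - x^2) (R^2 - (x - d)^2))) := by
    apply Continuous.mul continuous_const
    exact continuous_const.max (Continuous.min
      (continuous_const.sub (continuous_id.pow 2))
      (continuous_const.sub ((continuous_id.sub continuous_const).pow 2)))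
  have hcs : HasCompactSupport (fun x : ℝ => π * max 0 (min (R^2 - x^2) (R^2 - (x - d)^2))) := by
    apply HasCompactSupport.intro (isCompact_Icc (a := -R) (b := R))
    intro x hx
    simp only [Set.mem_Icc, not_and_or, not_le] at hx
    have hle : min (R^2 - x^2) (R^2 - (x - d)^2) ≤ 0 := by
      refine le_trans (min_le_left _ _) ?_
      rcases hx with hx | hx <;> nlinarith
    rw [max_eq_left hle, mul_zero]
  have hInt : Integrable (fun x : ℝ => π * max 0 (min (R^2 - x^2) (R^2 - (x - d)^2))) :=
    hcont.integrable_of_hasCompactSupport hcs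
  rw [← ofReal_integral_eq_lintegral_ofReal hInt
    (Filter.Eventually.of_forall fun x => by positivity)]
  rw [oneD_int R d hR hd hd2]

noncomputable def Wlens (R d : ℝ) : ℝ :=
  if d < 2*R then π * (16*R^3 - 12*R^2*d + d^3)/12 else 0

local notation "E3" => EuclideanSpace ℝ (Fin 3)

lemma gamma52 : Real.Gamma ((3:ℝ)/2 + 1) = 3/4 * Real.sqrt π := by
  rw [Real.Gamma_add_one (by norm_num)]
  have : (3:ℝ)/2 = 1/2 + 1 := by norm_num
  rw [this, Real.Gamma_add_one (by norm_num), Real.Gamma_one_half_eq]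
  ring

lemma vol_ball3 (r : ℝ) (hr : 0 ≤ r) :
    volume (ball (0 : E3) r) = ENNReal.ofReal (4/3 * π * r^3) := by
  rw [EuclideanSpace.volume_ball, Fintype.card_fin,
    show ((3:ℕ):ℝ)/2 + 1 = (3:ℝ)/2 + 1 by norm_num, gamma52]
  rw [← ENNReal.ofReal_pow hr, ← ENNReal.ofReal_mul (by positivity)]
  congr 1
  have hs : Real.sqrt π > 0 := Real.sqrt_pos.mpr Real.pi_pos
  have h3 : Real.sqrt π ^ 3 = π * Real.sqrt π := by
    rw [pow_succ, Real.sq_sqrt Real.pi_pos.le]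
  rw [h3]
  field_simp

lemma lens_vol (R : ℝ) (hR : 0 < R) (z : E3) :
    (volume (ball (0 : E3) R ∩ ball z R)).toReal = Wlens R ‖z‖ := by
  rcases le_or_gt (2*R) ‖z‖ with hz | hz
  · have he : ball (0 : E3) R ∩ ball z R = ∅ := by
      ext x
      simp only [Set.mem_inter_iff, mem_ball, Set.mem_empty_iff_false, iff_false, not_and_or,
        not_lt]
      by_contra hcon
      push_neg at hcon
      have := dist_triangle (0 : E3) x z
      rw [dist_comm (0:E3) x] at this
      have hz' : dist (0:E3) z = ‖z‖ := by simp
      linarith [hcon.1, hcon.2, hz' ▸ this]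
    rw [he, Wlens, if_neg (by push_neg; linarith)]
    simp
  · rcases eq_or_ne z 0 with rfl | hz0
    · rw [Set.inter_self, vol_ball3 R hR.le, ENNReal.toReal_ofReal (by positivity)]
      rw [Wlens, norm_zero, if_pos (show (0:ℝ) < 2*R by linarith)]
      ring
    · set d := ‖z‖ with hd
      have hdpos : 0 < d := norm_pos_iff.mpr hz0
      set w : E3 := EuclideanSpace.single (0 : Fin 3) d with hw
      have hwnorm : ‖w‖ = d := by
        rw [hw, EuclideanSpace.norm_single, Real.norm_eq_abs, abs_of_pos hdpos]
      -- reflection mapping z to w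
      have hnorm_eq : ‖z‖ = ‖w‖ := by rw [hwnorm]
      set e : E3 ≃ₗᵢ[ℝ] E3 := Submodule.reflection (ℝ ∙ (z - w))ᗮ with he0
      have hez : e z = w := Submodule.reflection_sub hnorm_eq
      have hesymm : e.symm w = z := by
        rw [← hez]; exact e.symm_apply_apply z
      have hesymm0 : e.symm 0 = 0 := by simp
      have hpre0 : ⇑e ⁻¹' (ball (0:E3) R ∩ ball w R) = ball (0:E3) R ∩ ball z R := by
        have hb : ∀ (c : E3), ⇑e ⁻¹' ball c R = ball (e.symm c) R := by
          intro c
          ext x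
          simp only [Set.mem_preimage, mem_ball]
          rw [show dist (e x) c = dist x (e.symm c) from by
            rw [← e.dist_map x (e.symm c), e.apply_symm_apply]]
        rw [Set.preimage_inter, hb, hb, hesymm, hesymm0]
      have hmp := e.measurePreserving.measure_preimage
        (s := ball (0:E3) R ∩ ball w R)
        ((measurableSet_ball.inter measurableSet_ball).nullMeasurableSet)
      rw [hpre0] at hmp
      rw [hmp]
      -- now compute volume for w = single 0 d
      have hpre : ((MeasurableEquiv.toLp 2 (Fin 3 → ℝ)).symm) ⁻¹'
          {y : Fin 3 → ℝ | y 0^2 + (y 1^2 + y 2^2) < R^2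
            ∧ (y 0 - d)^2 + (y 1^2 + y 2^2) < R^2}
          = ball (0:E3) R ∩ ball w R := by
        ext x
        have hx : ∀ i, ((MeasurableEquiv.toLp 2 (Fin 3 → ℝ)).symm) x i = x i := fun _ => rfl
        simp only [Set.mem_preimage, Set.mem_setOf_eq, Set.mem_inter_iff, mem_ball, hx]
        have hb1 : dist x (0:E3) = Real.sqrt (x 0^2 + (x 1^2 + x 2^2)) := by
          rw [EuclideanSpace.dist_eq]
          congr 1
          rw [Fin.sum_univ_three]
          simp [Real.dist_eq, sq_abs]
          ring
        have hb2 : dist x w = Real.sqrt ((x 0 - d)^2 + (x 1^2 + x 2^2)) := by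
          rw [EuclideanSpace.dist_eq]
          congr 1
          rw [Fin.sum_univ_three]
          have h0 : w 0 = d := by rw [hw]; simp [EuclideanSpace.single_apply]
          have h1 : w 1 = 0 := by rw [hw]; simp [EuclideanSpace.single_apply]
          have h2 : w 2 = 0 := by rw [hw]; simp [EuclideanSpace.single_apply]
          rw [h0, h1, h2]
          simp [Real.dist_eq, sq_abs]
          ring
        rw [hb1, hb2, Real.sqrt_lt' hR, Real.sqrt_lt' hR]
      rw [← hpre]
      rw [(EuclideanSpace.volume_preserving_symm_measurableEquiv_toLp (Fin 3)).measure_preimage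
        (by
          apply IsOpen.measurableSet ?_ |>.nullMeasurableSet
          apply IsOpen.inter
          · exact isOpen_lt (((continuous_apply (0:Fin 3)).pow 2).add
              (((continuous_apply (1:Fin 3)).pow 2).add
                ((continuous_apply (2:Fin 3)).pow 2))) continuous_const
          · exact isOpen_lt ((((continuous_apply (0:Fin 3)).sub continuous_const).pow 2).add
              (((continuous_apply (1:Fin 3)).pow 2).add
                ((continuous_apply (2:Fin 3)).pow 2))) continuous_const)]
      rw [lens_pi R d hR hdpos hz]
      have hXnn : (0:ℝ) ≤ 16*R^3 - 12*R^2*d + d^3 := by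
        have h4 : (0:ℝ) ≤ (4*R + d) * (2*R - d)^2 := by positivity
        nlinarith [h4]
      rw [ENNReal.toReal_ofReal (by positivity)]
      rw [Wlens, if_pos hz]

lemma integral_comp_sub (f : E3 → ℝ) (x : E3) : ∫ z, f (x - z) = ∫ z, f z := by
  calc ∫ z, f (x - z) = ∫ z, f (x + -z) := by simp_rw [sub_eq_add_neg]
    _ = ∫ z, f (x + z) := integral_neg_eq_self (fun z => f (x + z)) volume
    _ = ∫ z, f z := integral_add_left_eq_self (fun z => f z) x

lemma double_to_radial (R : ℝ) (hR : 0 < R) (K : E3 → ℝ) (hKcont : Continuous K)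
    (hKnn : ∀ z, 0 ≤ K z) (hKint : Integrable K) :
    (∫ x in ball (0:E3) R, ∫ x' in ball (0:E3) R, K (x - x'))
      = ∫ z, (volume (ball (0:E3) R ∩ ball z R)).toReal * K z := by
  set B := ball (0:E3) R with hB
  set F : E3 × E3 → ℝ := fun p => (B.indicator (fun _ => (1:ℝ)) p.1) *
    ({q : E3 × E3 | dist q.2 q.1 < R}.indicator (fun q => K q.2) p) with hF
  have hsetmeas : MeasurableSet {q : E3 × E3 | dist q.2 q.1 < R} :=
    (isOpen_lt (continuous_snd.dist continuous_fst) continuous_const).measurableSet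
  have hFmeas : AEStronglyMeasurable F (volume.prod volume) := by
    apply Measurable.aestronglyMeasurable
    apply Measurable.mul
    · exact (measurable_const.indicator measurableSet_ball).comp measurable_fst
    · exact Measurable.indicator (hKcont.measurable.comp measurable_snd) hsetmeas
  have hbound : Integrable (fun p : E3 × E3 => (B.indicator (fun _ => (1:ℝ)) p.1) * K p.2)
      (volume.prod volume) :=
    Integrable.mul_prod
      ((integrable_indicator_iff measurableSet_ball).mpr
        (integrableOn_const measure_ball_lt_top.ne))
      hKint
  have hFint : Integrable F (volume.prod volume) := by
    apply hbound.mono hFmeas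
    refine Filter.Eventually.of_forall fun p => ?_
    rw [hF]
    simp only [Real.norm_eq_abs, Set.indicator_apply]
    split_ifs <;> simp [abs_of_nonneg (hKnn p.2), hKnn p.2, abs_nonneg] <;> exact mul_nonneg (abs_nonneg _) (hKnn p.2)
  have hinner : ∀ x : E3, (∫ x' in B, K (x - x')) = ∫ z, (ball x R).indicator K z := by
    intro x
    rw [← MeasureTheory.integral_indicator measurableSet_ball]
    have hpt : ∀ x', B.indicator (fun y => K (x - y)) x' = (ball x R).indicator K (x - x') := by
      intro x'
      by_cases hmem : x' ∈ B
      · rw [Set.indicator_of_mem hmem]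
        have hm2 : x - x' ∈ ball x R := by
          rw [mem_ball, dist_eq_norm]
          simpa using mem_ball_zero_iff.mp hmem
        rw [Set.indicator_of_mem hm2]
      · rw [Set.indicator_of_notMem hmem, Set.indicator_of_notMem ?hh]
        case hh =>
          rw [mem_ball, dist_eq_norm]
          intro hcon
          apply hmem
          apply mem_ball_zero_iff.mpr
          simpa using hcon
    calc ∫ x', B.indicator (fun y => K (x - y)) x'
        = ∫ x', ((ball x R).indicator K) (x - x') := by simp_rw [hpt]
      _ = ∫ z, (ball x R).indicator K z := integral_comp_sub _ x
  have hL : (∫ x in B, ∫ x' in B, K (x - x')) = ∫ x, ∫ z, F (x, z) := by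
    rw [← MeasureTheory.integral_indicator measurableSet_ball]
    congr 1
    funext x
    by_cases hx : x ∈ B
    · rw [Set.indicator_of_mem hx, hinner x]
      congr 1
      funext z
      rw [hF]
      by_cases hzx : dist z x < R <;>
        simp [Set.indicator_apply, mem_ball, hx, hzx]
    · rw [Set.indicator_of_notMem hx]
      have hz : ∀ z, F (x, z) = 0 := fun z => by
        rw [hF]; simp [Set.indicator_of_notMem hx]
      simp [hz]
  have hswap := integral_integral_swap (f := fun x z => F (x, z)) (by exact hFint)
  have hRc : ∀ z, (∫ x, F (x, z)) = (volume (B ∩ ball z R)).toReal * K z := by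
    intro z
    have hpt : ∀ x, F (x, z) = (B ∩ ball z R).indicator (fun _ => K z) x := by
      intro x
      rw [hF]
      dsimp only
      have hiff : ((x, z) ∈ {q : E3 × E3 | dist q.2 q.1 < R}) ↔ x ∈ ball z R := by
        simp [mem_ball, dist_comm]
      by_cases h1 : x ∈ B <;> by_cases h2 : x ∈ ball z R
      · rw [Set.indicator_of_mem h1, Set.indicator_of_mem (hiff.mpr h2),
          Set.indicator_of_mem (Set.mem_inter h1 h2), one_mul]
      · rw [Set.indicator_of_mem h1, Set.indicator_of_notMem (fun hc => h2 (hiff.mp hc)),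
          Set.indicator_of_notMem (fun hc => h2 hc.2), mul_zero]
      · rw [Set.indicator_of_notMem h1, zero_mul,
          Set.indicator_of_notMem (fun hc => h1 hc.1)]
      · rw [Set.indicator_of_notMem h1, zero_mul,
          Set.indicator_of_notMem (fun hc => h1 hc.1)]
    simp_rw [hpt]
    rw [integral_indicator_const (K z) (measurableSet_ball.inter measurableSet_ball)]
    rw [smul_eq_mul]
    rfl
  rw [hL, hswap]
  exact integral_congr_ae (Filter.Eventually.of_forall hRc)

lemma radial_eval (R C c a u : ℝ) (hR : 0 < R) (hc : 0 < c) (hu : 0 < u)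
    (hcu : c*u = 2*R) (ha : 0 < a) (hc2 : c^2 = a) :
    (∫ y in Set.Ioi (0:ℝ), y^2 • (Wlens R y * (C * Real.exp (-y^2/a))))
      = c * ((π*C/12*(16*R^3*c^2)) *
              ((∫ s in (0:ℝ)..u, Real.exp (-s^2))/2 - u*Real.exp (-u^2)/2)
           - (π*C/12*(12*R^2*c^3)) * (1/2 - (1+u^2)*Real.exp (-u^2)/2)
           + (π*C/12*c^5) * (1 - (1+u^2+u^4/2)*Real.exp (-u^2))) := by
  have h2R : (0:ℝ) < 2*R := by linarith
  set g : ℝ → ℝ :=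
    fun y => y^2 * ((π*(16*R^3-12*R^2*y+y^3)/12) * (C * Real.exp (-y^2/a))) with hg
  have step1 : (∫ y in Set.Ioi (0:ℝ), y^2 • (Wlens R y * (C * Real.exp (-y^2/a))))
      = ∫ y in Set.Ioi (0:ℝ), (Set.Ioc (0:ℝ) (2*R)).indicator g y := by
    apply setIntegral_congr_fun measurableSet_Ioi
    intro y hy
    have hy0 : (0:ℝ) < y := hy
    by_cases hylt : y < 2*R
    · rw [Set.indicator_of_mem (Set.mem_Ioc.mpr ⟨hy0, hylt.le⟩), hg]
      simp only [Wlens, if_pos hylt, smul_eq_mul]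
    · simp only [Wlens, if_neg hylt, smul_eq_mul, zero_mul, mul_zero]
      rcases eq_or_lt_of_le (not_lt.mp hylt) with heq | hgt
      · rw [Set.indicator_of_mem (Set.mem_Ioc.mpr ⟨hy0, heq.ge⟩), hg]
        dsimp only
        have hz : 16*R^3-12*R^2*y+y^3 = 0 := by rw [← heq]; ring
        rw [hz]
        simp
      · rw [Set.indicator_of_notMem (by
          intro hmem
          exact absurd hmem.2 (not_le.mpr hgt))]
  have step2 : (∫ y in Set.Ioi (0:ℝ), (Set.Ioc (0:ℝ) (2*R)).indicator g y)
      = ∫ y in (0:ℝ)..(2*R), g y := by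
    rw [setIntegral_indicator measurableSet_Ioc,
      Set.inter_eq_self_of_subset_right Set.Ioc_subset_Ioi_self,
      intervalIntegral.integral_of_le h2R.le]
  have step3 : (∫ y in (0:ℝ)..(2*R), g y) = c • ∫ s in (0:ℝ)..u, g (c*s) := by
    rw [intervalIntegral.smul_integral_comp_mul_left g c, mul_zero, hcu]
  have hexp : ∀ s : ℝ, -(c*s)^2/a = -s^2 := by
    intro s
    rw [mul_pow, hc2]
    field_simp
  have hpt : ∀ s : ℝ, g (c*s)
      = (π*C/12*(16*R^3*c^2)) * (s^2*Real.exp (-s^2))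
        - (π*C/12*(12*R^2*c^3)) * (s^3*Real.exp (-s^2))
        + (π*C/12*c^5) * (s^5*Real.exp (-s^2)) := by
    intro s
    rw [hg]
    dsimp only
    rw [hexp s]
    ring
  have hi2 : IntervalIntegrable (fun s : ℝ => s^2*Real.exp (-s^2)) volume 0 u := by
    apply Continuous.intervalIntegrable; continuity
  have hi3 : IntervalIntegrable (fun s : ℝ => s^3*Real.exp (-s^2)) volume 0 u := by
    apply Continuous.intervalIntegrable; continuity
  have hi5 : IntervalIntegrable (fun s : ℝ => s^5*Real.exp (-s^2)) volume 0 u := by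
    apply Continuous.intervalIntegrable; continuity
  have step4 : (∫ s in (0:ℝ)..u, g (c*s))
      = (π*C/12*(16*R^3*c^2)) * (∫ s in (0:ℝ)..u, s^2*Real.exp (-s^2))
        - (π*C/12*(12*R^2*c^3)) * (∫ s in (0:ℝ)..u, s^3*Real.exp (-s^2))
        + (π*C/12*c^5) * (∫ s in (0:ℝ)..u, s^5*Real.exp (-s^2)) := by
    rw [intervalIntegral.integral_congr (g := fun s : ℝ =>
        (π*C/12*(16*R^3*c^2)) * (s^2*Real.exp (-s^2))
        - (π*C/12*(12*R^2*c^3)) * (s^3*Real.exp (-s^2))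
        + (π*C/12*c^5) * (s^5*Real.exp (-s^2))) (fun s _ => hpt s)]
    rw [intervalIntegral.integral_add ((hi2.const_mul _).sub (hi3.const_mul _))
      (hi5.const_mul _)]
    rw [intervalIntegral.integral_sub (hi2.const_mul _) (hi3.const_mul _)]
    rw [intervalIntegral.integral_const_mul, intervalIntegral.integral_const_mul,
      intervalIntegral.integral_const_mul]
  rw [step1, step2, step3, step4, mom2, mom3, mom5, smul_eq_mul]

/-- Integrated full-FRAP curve for free diffusion: the double average of the
heat kernel over the bleached ball admits a closed form in u = R/√(Dt). -/
theorem full_frap_free_diffusion (R D t : ℝ) (hR : 0 < R) (hD : 0 < D) (ht : 0 < t) :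
    let u : ℝ := R / Real.sqrt (D * t)
    let V : ℝ := 4 * Real.pi * R ^ 3 / 3
    (1 / V) *
        ∫ x in ball (0 : EuclideanSpace ℝ (Fin 3)) R,
          ∫ x' in ball (0 : EuclideanSpace ℝ (Fin 3)) R,
            ((4 * Real.pi * D * t) ^ ((3:ℝ)/2))⁻¹ *
              Real.exp (-‖x - x'‖ ^ 2 / (4 * D * t))
      = (2 / Real.sqrt Real.pi) * (∫ s in (0:ℝ)..u, Real.exp (-s ^ 2))
        - (1 / Real.sqrt Real.pi) *
            ((3 / u - 2 / u ^ 3) - Real.exp (-u ^ 2) * (1 / u - 2 / u ^ 3)) := by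
  intro u V
  have hu : u = R / Real.sqrt (D * t) := rfl
  have hV : V = 4 * π * R ^ 3 / 3 := rfl
  have hDt : (0:ℝ) < D * t := by positivity
  set S := Real.sqrt (D * t) with hSdef
  have hSpos : 0 < S := Real.sqrt_pos.mpr hDt
  have hS2 : S^2 = D * t := Real.sq_sqrt hDt.le
  set P := Real.sqrt π with hPdef
  have hPpos : 0 < P := Real.sqrt_pos.mpr Real.pi_pos
  have hP2 : P^2 = π := Real.sq_sqrt Real.pi_pos.le
  have hupos : 0 < u := by rw [hu]; positivity
  set C := ((4 * π * D * t) ^ ((3:ℝ)/2))⁻¹ with hCdef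
  have hCval : C = ((2*P*S)^3)⁻¹ := by
    rw [hCdef]
    congr 1
    have hx : (0:ℝ) ≤ 2*P*S := by positivity
    have h1 : 4 * π * D * t = (2*P*S)^(2:ℕ) := by
      have : (2*P*S)^(2:ℕ) = 4 * P^2 * S^2 := by ring
      rw [this, hP2, hS2]; ring
    rw [h1, ← Real.rpow_natCast (2*P*S) 2, ← Real.rpow_mul hx,
      show ((2:ℕ):ℝ) * ((3:ℝ)/2) = ((3:ℕ):ℝ) by norm_num, Real.rpow_natCast]
  have hCpos : 0 < C := by rw [hCval]; positivity
  set c := 2*S with hcdef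
  have hcpos : 0 < c := by positivity
  have hc2 : c^2 = 4*D*t := by rw [hcdef]; nlinarith [hS2]
  have hcu : c * u = 2*R := by
    rw [hcdef, hu]
    field_simp
  have hapos : (0:ℝ) < 4*D*t := by positivity
  -- kernel
  set K : EuclideanSpace ℝ (Fin 3) → ℝ :=
    fun z => C * Real.exp (-‖z‖^2 / (4*D*t)) with hK
  have hKcont : Continuous K := by
    rw [hK]
    exact continuous_const.mul
      (Real.continuous_exp.comp (((continuous_norm.pow 2).neg).div_const _))
  have hKnn : ∀ z, 0 ≤ K z := fun z => by
    rw [hK]; positivity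
  have hKint : Integrable K := by
    rw [hK]
    apply Integrable.const_mul
    have hb : (0:ℝ) < (4*D*t)⁻¹ := by positivity
    have h := GaussianFourier.integrable_cexp_neg_mul_sq_norm_add
      (V := EuclideanSpace ℝ (Fin 3)) (b := (((4*D*t)⁻¹ : ℝ) : ℂ))
      (by simpa using hb) 0 0
    have h2 := h.norm
    apply h2.congr
    refine Filter.Eventually.of_forall fun v => ?_
    dsimp only
    rw [show (-(((4*D*t)⁻¹:ℝ):ℂ) * (‖v‖:ℂ) ^ 2 + 0 * ((inner ℝ (0:EuclideanSpace ℝ (Fin 3)) v : ℝ):ℂ))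
        = (((-(4*D*t)⁻¹ * ‖v‖^2 : ℝ)) : ℂ) from by push_cast; ring]
    rw [Complex.norm_exp_ofReal]
    congr 1
    ring
  -- step A: double integral to radial
  have hdb := double_to_radial R hR K hKcont hKnn hKint
  simp only [hK] at hdb
  rw [hdb]
  -- lens volume
  have hlens : (∫ z, (volume (ball (0:EuclideanSpace ℝ (Fin 3)) R ∩ ball z R)).toReal *
      (C * Real.exp (-‖z‖^2 / (4*D*t))))
      = ∫ z : EuclideanSpace ℝ (Fin 3),
          (fun r : ℝ => Wlens R r * (C * Real.exp (-r^2 / (4*D*t)))) ‖z‖ := by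
    apply MeasureTheory.integral_congr_ae
    refine Filter.Eventually.of_forall fun z => ?_
    dsimp only
    rw [lens_vol R hR z]
  rw [hlens]
  have hnorm := MeasureTheory.integral_fun_norm_addHaar (volume : Measure (EuclideanSpace ℝ (Fin 3)))
    (fun r : ℝ => Wlens R r * (C * Real.exp (-r^2 / (4*D*t))))
  rw [finrank_euclideanSpace_fin] at hnorm
  rw [hnorm]
  have hball1 : (volume (ball (0 : EuclideanSpace ℝ (Fin 3)) 1)).toReal = 4/3 * π := by
    rw [vol_ball3 1 (by norm_num), ENNReal.toReal_ofReal (by positivity)]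
    norm_num
  rw [measureReal_def, hball1]
  rw [radial_eval R C c (4*D*t) u hR hcpos hupos hcu hapos hc2]
  -- final algebra
  rw [nsmul_eq_mul, smul_eq_mul]
  rw [hV, hCval]
  have hRu : R = u * S := by
    rw [hu]
    field_simp
  rw [hRu, hcdef]
  rw [show π = P^2 from hP2.symm]
  have hXpos : 0 < Real.exp (-u^2) := Real.exp_pos _
  field_simp
  ring
end
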